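/- Let E ⊂ Ω × 𝕋 be a measurable set, n ≥ 2 an integer, and suppose that for every t ∈ [0,1], Δ_t(E) := μ((E+t) \ E) < μ(E)/(2n), where E + t denotes the shift of E by t in the 𝕋 coordinate. Let Ω₁ = { ω ∈ Ω : m(E_ω) > 1 − 1/n }, where E_ω = {θ : (ω,θ) ∈ E}. Then 𝒫(Ω₁) > μ(E)/2. -/

import Mathlib

open MeasureTheory

/-- If `E ⊂ Ω × 𝕋` satisfies `μ((E+t)\E) < μ(E)/(2n)` for every shift `t`, then the set
`Ω₁` of `ω` with long sections `m(E_ω) > 1 - 1/n` has probability `> μ(E)/2`. -/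
theorem stmt_5 {Ω : Type*} [MeasureSpace Ω] [IsProbabilityMeasure (volume : Measure Ω)]
    (E : Set (Ω × AddCircle (1 : ℝ))) (hE : MeasurableSet E)
    (n : ℕ) (hn : 2 ≤ n)
    (hshift : ∀ t : AddCircle (1 : ℝ),
      volume ({p : Ω × AddCircle (1 : ℝ) | (p.1, p.2 - t) ∈ E} \ E)
        < volume E / (2 * n)) :
    volume E / 2
      < volume {ω : Ω |
          1 - 1 / (n : ENNReal) < volume {θ : AddCircle (1 : ℝ) | (ω, θ) ∈ E}} := by
  classical
  have hν1 : (volume : Measure (AddCircle (1 : ℝ))) Set.univ = 1 := by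
    simp [AddCircle.measure_univ]
  set ν : Measure (AddCircle (1 : ℝ)) := volume with hνdef
  set P : Measure Ω := volume with hPdef
  haveI : IsProbabilityMeasure ν := ⟨hν1⟩
  set F : Ω → ENNReal := fun ω => ν {θ : AddCircle (1 : ℝ) | (ω, θ) ∈ E} with hFdef
  set A : Set Ω := {ω : Ω | 1 - 1 / (n : ENNReal) < F ω} with hAdef
  show volume E / 2 < P A
  have hsec : ∀ ω : Ω, MeasurableSet {θ : AddCircle (1 : ℝ) | (ω, θ) ∈ E} := fun ω =>
    hE.preimage measurable_prodMk_left
  have hF : Measurable F := measurable_measure_prodMk_left hE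
  have hFle : ∀ ω, F ω ≤ 1 := fun ω => (measure_mono (Set.subset_univ _)).trans hν1.le
  have hA : MeasurableSet A := measurableSet_lt measurable_const hF
  -- μ E = ∫ F
  have hμE : volume E = ∫⁻ ω, F ω ∂P := by
    rw [Measure.volume_eq_prod, Measure.prod_apply hE]; rfl
  have hμE1 : volume E ≤ 1 := by
    rw [hμE]
    calc ∫⁻ ω, F ω ∂P ≤ ∫⁻ _, 1 ∂P := lintegral_mono hFle
    _ = 1 := by simp
  -- the key Fubini identity
  have key : ∫⁻ t, volume ({p : Ω × AddCircle (1 : ℝ) | (p.1, p.2 - t) ∈ E} \ E) ∂ν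
      = ∫⁻ ω, F ω * (1 - F ω) ∂P := by
    have step1 : ∀ t : AddCircle (1 : ℝ),
        volume ({p : Ω × AddCircle (1 : ℝ) | (p.1, p.2 - t) ∈ E} \ E)
        = ∫⁻ p : Ω × AddCircle (1 : ℝ),
            E.indicator 1 (p.1, p.2 - t) * Eᶜ.indicator 1 p := by
      intro t
      have hm : MeasurableSet ({p : Ω × AddCircle (1 : ℝ) | (p.1, p.2 - t) ∈ E} \ E) :=
        (hE.preimage (measurable_fst.prodMk (measurable_snd.sub measurable_const))).diff hE
      rw [← lintegral_indicator_one hm]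
      congr 1
      ext p
      by_cases h1 : (p.1, p.2 - t) ∈ E <;> by_cases h2 : p ∈ E <;>
        simp [Set.indicator_apply, h1, h2, Set.mem_diff]
    simp_rw [step1]
    have hunc : Measurable (fun q : AddCircle (1 : ℝ) × (Ω × AddCircle (1 : ℝ)) =>
        E.indicator (1 : Ω × AddCircle (1 : ℝ) → ENNReal) (q.2.1, q.2.2 - q.1)
          * Eᶜ.indicator 1 q.2) := by
      refine Measurable.mul ?_ ?_
      · exact (measurable_const.indicator hE).comp
          ((measurable_snd.fst).prodMk (measurable_snd.snd.sub measurable_fst))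
      · exact (measurable_const.indicator hE.compl).comp measurable_snd
    rw [lintegral_lintegral_swap hunc.aemeasurable]
    have inner : ∀ p : Ω × AddCircle (1 : ℝ),
        (∫⁻ t, E.indicator (1 : Ω × AddCircle (1 : ℝ) → ENNReal) (p.1, p.2 - t)
          * Eᶜ.indicator 1 p ∂ν) = F p.1 * Eᶜ.indicator 1 p := by
      intro p
      rw [lintegral_mul_const _ (show Measurable fun t : AddCircle (1 : ℝ) =>
        E.indicator (1 : Ω × AddCircle (1 : ℝ) → ENNReal) (p.1, p.2 - t) from
        (measurable_const.indicator hE).comp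
          (measurable_const.prodMk (measurable_const.sub measurable_id)))]
      congr 1
      have heq : ∀ t : AddCircle (1 : ℝ),
          E.indicator (1 : Ω × AddCircle (1 : ℝ) → ENNReal) (p.1, p.2 - t)
          = ({θ : AddCircle (1 : ℝ) | (p.1, θ) ∈ E}).indicator 1 (p.2 - t) := by
        intro t
        by_cases h : (p.1, p.2 - t) ∈ E <;> simp [Set.indicator_apply, h]
      simp_rw [heq]
      rw [(Measure.measurePreserving_sub_left ν p.2).lintegral_comp
        (show Measurable ({θ : AddCircle (1 : ℝ) | (p.1, θ) ∈ E}.indicator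
          (1 : AddCircle (1 : ℝ) → ENNReal)) from measurable_const.indicator (hsec p.1))]
      rw [lintegral_indicator_one (hsec p.1)]
    simp_rw [inner]
    rw [Measure.volume_eq_prod, lintegral_prod _
      ((show Measurable fun p : Ω × AddCircle (1 : ℝ) => F p.1 * Eᶜ.indicator 1 p from
        (hF.comp measurable_fst).mul (measurable_const.indicator hE.compl)).aemeasurable)]
    refine lintegral_congr fun ω => ?_
    show (∫⁻ θ, F ω * Eᶜ.indicator 1 (ω, θ) ∂ν) = F ω * (1 - F ω)
    rw [lintegral_const_mul _ (show Measurable fun θ : AddCircle (1 : ℝ) =>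
      Eᶜ.indicator (1 : Ω × AddCircle (1 : ℝ) → ENNReal) (ω, θ) from
      (measurable_const.indicator hE.compl).comp measurable_prodMk_left)]
    congr 1
    have heq : ∀ θ : AddCircle (1 : ℝ),
        Eᶜ.indicator (1 : Ω × AddCircle (1 : ℝ) → ENNReal) (ω, θ)
        = ({θ : AddCircle (1 : ℝ) | (ω, θ) ∈ E}ᶜ).indicator 1 θ := by
      intro θ
      by_cases h : (ω, θ) ∈ E <;> simp [Set.indicator_apply, h]
    simp_rw [heq]
    rw [lintegral_indicator_one (hsec ω).compl,
      measure_compl (hsec ω) ((hFle ω).trans_lt ENNReal.one_lt_top).ne, hν1]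
  -- strict upper bound on the integral
  have hn0 : (n : ENNReal) ≠ 0 := by
    simp only [ne_eq, Nat.cast_eq_zero]; omega
  have hntop : (n : ENNReal) ≠ ⊤ := ENNReal.natCast_ne_top n
  have hne : (2 : ENNReal) * n ≠ 0 := by simp [hn0]
  have hupper : ∫⁻ t, volume ({p : Ω × AddCircle (1 : ℝ) | (p.1, p.2 - t) ∈ E} \ E) ∂ν
      < volume E / (2 * n) := by
    have hle : ∫⁻ t, volume ({p : Ω × AddCircle (1 : ℝ) | (p.1, p.2 - t) ∈ E} \ E) ∂ν
        ≤ volume E / (2 * n) := by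
      calc _ ≤ ∫⁻ _, volume E / (2 * n) ∂ν := lintegral_mono fun t => (hshift t).le
      _ = volume E / (2 * n) := by simp [hν1]
    have hfin : volume E / (2 * n) ≠ ⊤ :=
      (ENNReal.div_lt_top (hμE1.trans_lt ENNReal.one_lt_top).ne hne).ne
    have hνne : ν ≠ 0 := by
      rw [Ne, ← Measure.measure_univ_eq_zero, hν1]; exact one_ne_zero
    have := lintegral_strict_mono (μ := ν) (f := fun t =>
        volume ({p : Ω × AddCircle (1 : ℝ) | (p.1, p.2 - t) ∈ E} \ E))
        (g := fun _ => volume E / (2 * n)) hνne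
        measurable_const.aemeasurable (hle.trans_lt hfin.lt_top).ne
        (Filter.Eventually.of_forall hshift)
    simp [hν1] at this; exact this

  -- lower bound
  have hninv : 1 / (n : ENNReal) ≤ 1 := by
    rw [one_div]
    exact ENNReal.inv_le_one.mpr (by exact_mod_cast Nat.one_le_of_lt hn)
  have hAint : ∫⁻ ω in A, F ω ∂P ≤ P A := by
    calc ∫⁻ ω in A, F ω ∂P ≤ ∫⁻ _ in A, 1 ∂P := lintegral_mono hFle
    _ = P A := by simp
  have hcompl : volume E - P A ≤ ∫⁻ ω in Aᶜ, F ω ∂P := by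
    rw [tsub_le_iff_right]
    calc volume E = ∫⁻ ω, F ω ∂P := hμE
    _ = ∫⁻ ω in A, F ω ∂P + ∫⁻ ω in Aᶜ, F ω ∂P := (lintegral_add_compl F hA).symm
    _ ≤ P A + ∫⁻ ω in Aᶜ, F ω ∂P := add_le_add hAint le_rfl
    _ = ∫⁻ ω in Aᶜ, F ω ∂P + P A := add_comm _ _
  have hlower : (volume E - P A) * (1 / n) ≤ ∫⁻ ω, F ω * (1 - F ω) ∂P := by
    calc (volume E - P A) * (1 / n) ≤ (∫⁻ ω in Aᶜ, F ω ∂P) * (1 / n) :=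
      mul_le_mul_of_nonneg_right hcompl (zero_le)
    _ = ∫⁻ ω in Aᶜ, F ω * (1 / n) ∂P := (lintegral_mul_const _ hF).symm
    _ ≤ ∫⁻ ω in Aᶜ, F ω * (1 - F ω) ∂P := by
        refine setLIntegral_mono (hF.mul (measurable_const.sub hF)) fun ω hω => ?_
        have hωA : F ω ≤ 1 - 1 / n := not_lt.mp hω
        refine mul_le_mul_of_nonneg_left ?_ (zero_le)
        calc (1 : ENNReal) / n = 1 - (1 - 1 / n) :=
          (ENNReal.sub_sub_cancel ENNReal.one_ne_top hninv).symm
        _ ≤ 1 - F ω := tsub_le_tsub_left hωA 1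
    _ ≤ ∫⁻ ω, F ω * (1 - F ω) ∂P := setLIntegral_le_lintegral _ _
  -- combine
  have hchain : (volume E - P A) * (1 / n) < volume E / (2 * n) :=
    hlower.trans_lt (key ▸ hupper)
  have h2n : volume E / (2 * n) = (volume E / 2) * (1 / n) := by
    rw [div_eq_mul_inv, div_eq_mul_inv, one_div,
      ENNReal.mul_inv (Or.inl two_ne_zero) (Or.inl ENNReal.ofNat_ne_top), mul_assoc]
  have hfinal : volume E - P A < volume E / 2 := by
    rw [h2n] at hchain
    exact lt_of_mul_lt_mul_right hchain (zero_le)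
  by_contra hcon
  push_neg at hcon
  have : volume E / 2 ≤ volume E - P A := by
    calc volume E / 2 = volume E - volume E / 2 :=
      (ENNReal.sub_half (hμE1.trans_lt ENNReal.one_lt_top).ne).symm
    _ ≤ volume E - P A := tsub_le_tsub_left hcon _
  exact absurd (this.trans_lt hfinal) (lt_irrefl _)
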